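/- Let G and G† be groups each equipped with a surjection onto Z, and let G‡ = G *_Z G† be the amalgamated free product identifying the preferred generators (meridians). Suppose G/G^{(2)} ≅ Z ⋉ H and G†/(G†)^{(2)} ≅ Z ⋉ H† where H, H† are the respective Alexander modules and the identified elements map to (1,0) in each semidirect product. Then G‡/(G‡)^{(2)} ≅ Z ⋉ (H ⊕ H†), i.e. the metabelian quotient of the amalgamated product is the semidirect product of Z with the direct sum of the modules. -/

import Mathlib

instance derivedSeriesNormal (G : Type*) [Group G] (n : ℕ) : (derivedSeries G n).Normal :=
  derivedSeries_normal G n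

/-- The diagonal action of `ℤ` on a product `H × H†` of two (multiplicatively written)
abelian groups, each with a `ℤ`-action. -/
def prodAut {H H' : Type*} [CommGroup H] [CommGroup H']
    (φ : Multiplicative ℤ →* MulAut H) (φ' : Multiplicative ℤ →* MulAut H') :
    Multiplicative ℤ →* MulAut (H × H') where
  toFun n := MulEquiv.prodCongr (φ n) (φ' n)
  map_one' := by
    ext x <;> simp [MulEquiv.prodCongr]
  map_mul' := by
    intro a b
    ext x <;> simp [MulEquiv.prodCongr]

/-- The second derived subgroup of a semidirect product of two abelian groups is trivial. -/
lemma aux_derivedSeries_two_semidirect {N G : Type*} [CommGroup N] [CommGroup G]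
    (φ : G →* MulAut N) : derivedSeries (SemidirectProduct N G φ) 2 = ⊥ := by
  have h1 : derivedSeries (SemidirectProduct N G φ) 1 ≤
      (SemidirectProduct.rightHom (φ := φ)).ker := by
    rw [derivedSeries_one]
    exact Abelianization.commutator_subset_ker _
  have h2 : ⁅(SemidirectProduct.rightHom (φ := φ)).ker,
      (SemidirectProduct.rightHom (φ := φ)).ker⁆ ≤ (⊥ : Subgroup _) := by
    rw [Subgroup.commutator_le]
    intro a ha b hb
    rw [← SemidirectProduct.range_inl_eq_ker_rightHom] at ha hb
    obtain ⟨n₁, rfl⟩ := ha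
    obtain ⟨n₂, rfl⟩ := hb
    have : Commute (SemidirectProduct.inl (φ := φ) n₁) (SemidirectProduct.inl n₂) :=
      (Commute.all n₁ n₂).map _
    simpa [Subgroup.mem_bot] using commutatorElement_eq_one_iff_commute.mpr this
  show derivedSeries (SemidirectProduct N G φ) (1 + 1) = ⊥
  rw [derivedSeries_succ, eq_bot_iff]
  exact le_trans (Subgroup.commutator_mono h1 h1) h2

/-- The second derived subgroup of a quotient by the second derived subgroup is trivial. -/
lemma aux_derivedSeries_two_quot (A : Type*) [Group A] :
    derivedSeries (A ⧸ derivedSeries A 2) 2 = ⊥ := by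
  rw [← map_derivedSeries_eq (QuotientGroup.mk'_surjective (derivedSeries A 2)) 2,
    Subgroup.map_eq_bot_iff, QuotientGroup.ker_mk']

open scoped commutatorElement

theorem metabelian_quotient_of_amalgamated_product
    {G G' : Type*} [Group G] [Group G'] (m : G) (m' : G')
    (χ : G →* Multiplicative ℤ) (hχsurj : Function.Surjective χ)
    (hχm : χ m = Multiplicative.ofAdd 1) (hχker : χ.ker = derivedSeries G 1)
    (χ' : G' →* Multiplicative ℤ) (hχ'surj : Function.Surjective χ')
    (hχ'm : χ' m' = Multiplicative.ofAdd 1) (hχ'ker : χ'.ker = derivedSeries G' 1)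
    {H H' : Type*} [CommGroup H] [CommGroup H']
    (φH : Multiplicative ℤ →* MulAut H) (φH' : Multiplicative ℤ →* MulAut H')
    (hbij : Function.Bijective (fun h : H => φH (Multiplicative.ofAdd 1) h * h⁻¹))
    (hbij' : Function.Bijective (fun h : H' => φH' (Multiplicative.ofAdd 1) h * h⁻¹))
    (e : (G ⧸ derivedSeries G 2) ≃* SemidirectProduct H (Multiplicative ℤ) φH)
    (he : e (QuotientGroup.mk m) = SemidirectProduct.inr (Multiplicative.ofAdd 1))
    (e' : (G' ⧸ derivedSeries G' 2) ≃* SemidirectProduct H' (Multiplicative ℤ) φH')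
    (he' : e' (QuotientGroup.mk m') = SemidirectProduct.inr (Multiplicative.ofAdd 1)) :
    letI Amal := (Monoid.Coprod G G') ⧸ Subgroup.normalClosure
      {x : Monoid.Coprod G G' | ∃ n : ℤ,
        x = Monoid.Coprod.inl (m ^ n) * (Monoid.Coprod.inr (m' ^ n))⁻¹}
    Nonempty ((Amal ⧸ derivedSeries Amal 2) ≃*
      SemidirectProduct (H × H') (Multiplicative ℤ) (prodAut φH φH')) := by
  set Rel : Set (Monoid.Coprod G G') := {x : Monoid.Coprod G G' | ∃ n : ℤ,
      x = Monoid.Coprod.inl (m ^ n) * (Monoid.Coprod.inr (m' ^ n))⁻¹} with hRel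
  set Amal := (Monoid.Coprod G G') ⧸ Subgroup.normalClosure Rel with hAmal
  set Q := Amal ⧸ derivedSeries Amal 2 with hQ
  set T := SemidirectProduct (H × H') (Multiplicative ℤ) (prodAut φH φH') with hT
  show Nonempty (Q ≃* T)
  -- the inclusion `H ⋊ ℤ →* (H × H') ⋊ ℤ`
  have hcompat : ∀ z : Multiplicative ℤ,
      ((SemidirectProduct.inl (φ := prodAut φH φH')).comp (MonoidHom.inl H H')).comp
        (φH z).toMonoidHom =
      (MulAut.conj ((SemidirectProduct.inr (φ := prodAut φH φH')) z)).toMonoidHom.comp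
        ((SemidirectProduct.inl (φ := prodAut φH φH')).comp (MonoidHom.inl H H')) := by
    intro z
    refine MonoidHom.ext fun h => ?_
    simp only [MonoidHom.comp_apply, MulEquiv.coe_toMonoidHom, MulAut.conj_apply,
      MonoidHom.inl_apply]
    have hp : ((prodAut φH φH') z ((h, 1) : H × H')) = (φH z h, 1) := by
      simp [prodAut, MulEquiv.prodCongr, Prod.ext_iff]
    rw [← hp, SemidirectProduct.inl_aut z ((h, 1) : H × H'), map_inv]
  have hcompat' : ∀ z : Multiplicative ℤ,
      ((SemidirectProduct.inl (φ := prodAut φH φH')).comp (MonoidHom.inr H H')).comp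
        (φH' z).toMonoidHom =
      (MulAut.conj ((SemidirectProduct.inr (φ := prodAut φH φH')) z)).toMonoidHom.comp
        ((SemidirectProduct.inl (φ := prodAut φH φH')).comp (MonoidHom.inr H H')) := by
    intro z
    refine MonoidHom.ext fun h => ?_
    simp only [MonoidHom.comp_apply, MulEquiv.coe_toMonoidHom, MulAut.conj_apply,
      MonoidHom.inr_apply]
    have hp : ((prodAut φH φH') z ((1, h) : H × H')) = (1, φH' z h) := by
      simp [prodAut, MulEquiv.prodCongr, Prod.ext_iff]
    rw [← hp, SemidirectProduct.inl_aut z ((1, h) : H × H'), map_inv]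
  set jH : SemidirectProduct H (Multiplicative ℤ) φH →* T :=
    SemidirectProduct.lift ((SemidirectProduct.inl).comp (MonoidHom.inl H H'))
      SemidirectProduct.inr hcompat with hjH
  set jH' : SemidirectProduct H' (Multiplicative ℤ) φH' →* T :=
    SemidirectProduct.lift ((SemidirectProduct.inl).comp (MonoidHom.inr H H'))
      SemidirectProduct.inr hcompat' with hjH'
  set fG : G →* T := (jH.comp e.toMonoidHom).comp (QuotientGroup.mk' (derivedSeries G 2))
    with hfG
  set fG' : G' →* T := (jH'.comp e'.toMonoidHom).comp (QuotientGroup.mk' (derivedSeries G' 2))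
    with hfG'
  set F0 : Monoid.Coprod G G' →* T := Monoid.Coprod.lift fG fG' with hF0
  have hfGm : ∀ n : ℤ, fG (m ^ n) = SemidirectProduct.inr (Multiplicative.ofAdd n) := by
    intro n
    have : fG m = SemidirectProduct.inr (Multiplicative.ofAdd 1) := by
      simp only [hfG, MonoidHom.comp_apply, QuotientGroup.mk'_apply, MulEquiv.coe_toMonoidHom, he]
      simp [hjH]
    rw [map_zpow, this, ← map_zpow, ← ofAdd_zsmul]
    norm_num
  have hfG'm : ∀ n : ℤ, fG' (m' ^ n) = SemidirectProduct.inr (Multiplicative.ofAdd n) := by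
    intro n
    have : fG' m' = SemidirectProduct.inr (Multiplicative.ofAdd 1) := by
      simp only [hfG', MonoidHom.comp_apply, QuotientGroup.mk'_apply, MulEquiv.coe_toMonoidHom,
        he']
      simp [hjH']
    rw [map_zpow, this, ← map_zpow, ← ofAdd_zsmul]
    norm_num
  have hkerF0 : Subgroup.normalClosure Rel ≤ F0.ker := by
    apply Subgroup.normalClosure_le_normal
    rintro x ⟨n, rfl⟩
    simp only [SetLike.mem_coe, MonoidHom.mem_ker, map_mul, map_inv,
      Monoid.Coprod.lift_apply_inl, Monoid.Coprod.lift_apply_inr, hF0]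
    rw [hfGm n, hfG'm n, mul_inv_cancel]
  set F1 : Amal →* T := QuotientGroup.lift _ F0 hkerF0 with hF1
  have hbotT : derivedSeries T 2 = ⊥ := aux_derivedSeries_two_semidirect _
  have hkerF1 : derivedSeries Amal 2 ≤ F1.ker := by
    intro x hx
    have : F1 x ∈ (derivedSeries Amal 2).map F1 := Subgroup.mem_map_of_mem _ hx
    have := map_derivedSeries_le_derivedSeries F1 2 this
    rw [hbotT, Subgroup.mem_bot] at this
    exact this
  set F : Q →* T := QuotientGroup.lift _ F1 hkerF1 with hF
  -- the backward map
  set k : Monoid.Coprod G G' →* Q :=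
    (QuotientGroup.mk' (derivedSeries Amal 2)).comp
      (QuotientGroup.mk' (Subgroup.normalClosure Rel)) with hk
  have hksurj : Function.Surjective k :=
    (QuotientGroup.mk'_surjective _).comp (QuotientGroup.mk'_surjective _)
  have hbotQ : derivedSeries Q 2 = ⊥ := aux_derivedSeries_two_quot Amal
  have hkerG : derivedSeries G 2 ≤ (k.comp Monoid.Coprod.inl).ker := by
    intro g hg
    have : (k.comp Monoid.Coprod.inl) g ∈
        (derivedSeries G 2).map (k.comp Monoid.Coprod.inl) := Subgroup.mem_map_of_mem _ hg
    have := map_derivedSeries_le_derivedSeries (k.comp Monoid.Coprod.inl) 2 this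
    rw [hbotQ, Subgroup.mem_bot] at this
    exact this
  have hkerG' : derivedSeries G' 2 ≤ (k.comp Monoid.Coprod.inr).ker := by
    intro g hg
    have : (k.comp Monoid.Coprod.inr) g ∈
        (derivedSeries G' 2).map (k.comp Monoid.Coprod.inr) := Subgroup.mem_map_of_mem _ hg
    have := map_derivedSeries_le_derivedSeries (k.comp Monoid.Coprod.inr) 2 this
    rw [hbotQ, Subgroup.mem_bot] at this
    exact this
  set ιG : (G ⧸ derivedSeries G 2) →* Q :=
    QuotientGroup.lift _ (k.comp Monoid.Coprod.inl) hkerG with hιG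
  set ιG' : (G' ⧸ derivedSeries G' 2) →* Q :=
    QuotientGroup.lift _ (k.comp Monoid.Coprod.inr) hkerG' with hιG'
  set ι : SemidirectProduct H (Multiplicative ℤ) φH →* Q := ιG.comp e.symm.toMonoidHom with hι
  set ι' : SemidirectProduct H' (Multiplicative ℤ) φH' →* Q := ιG'.comp e'.symm.toMonoidHom
    with hι'
  set β : H →* Q := ι.comp SemidirectProduct.inl with hβ
  set β' : H' →* Q := ι'.comp SemidirectProduct.inl with hβ'
  set μ : Multiplicative ℤ →* Q := ι.comp SemidirectProduct.inr with hμdef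
  set μ' : Multiplicative ℤ →* Q := ι'.comp SemidirectProduct.inr with hμ'def
  have hesymm : ∀ n : ℤ, e.symm (SemidirectProduct.inr (Multiplicative.ofAdd n)) =
      QuotientGroup.mk (m ^ n) := by
    intro n
    apply e.injective
    rw [MulEquiv.apply_symm_apply]
    have : (QuotientGroup.mk (m ^ n) : G ⧸ derivedSeries G 2) = (QuotientGroup.mk m) ^ n := rfl
    rw [this, map_zpow, he, ← map_zpow, ← ofAdd_zsmul]
    norm_num
  have he'symm : ∀ n : ℤ, e'.symm (SemidirectProduct.inr (Multiplicative.ofAdd n)) =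
      QuotientGroup.mk (m' ^ n) := by
    intro n
    apply e'.injective
    rw [MulEquiv.apply_symm_apply]
    have : (QuotientGroup.mk (m' ^ n) : G' ⧸ derivedSeries G' 2) = (QuotientGroup.mk m') ^ n :=
      rfl
    rw [this, map_zpow, he', ← map_zpow, ← ofAdd_zsmul]
    norm_num
  have hμ : ∀ n : ℤ, μ (Multiplicative.ofAdd n) = k (Monoid.Coprod.inl (m ^ n)) := by
    intro n
    simp only [hμdef, MonoidHom.comp_apply, MulEquiv.coe_toMonoidHom, hι, hesymm n]
    rfl
  have hμ' : ∀ n : ℤ, μ' (Multiplicative.ofAdd n) = k (Monoid.Coprod.inr (m' ^ n)) := by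
    intro n
    simp only [hμ'def, MonoidHom.comp_apply, MulEquiv.coe_toMonoidHom, hι', he'symm n]
    rfl
  have hrel : ∀ n : ℤ, k (Monoid.Coprod.inl (m ^ n)) = k (Monoid.Coprod.inr (m' ^ n)) := by
    intro n
    have hmem : Monoid.Coprod.inl (m ^ n) * (Monoid.Coprod.inr (m' ^ n) :
        Monoid.Coprod G G')⁻¹ ∈ Subgroup.normalClosure Rel :=
      Subgroup.subset_normalClosure ⟨n, rfl⟩
    have : k (Monoid.Coprod.inl (m ^ n) * (Monoid.Coprod.inr (m' ^ n))⁻¹) = 1 := by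
      have : (QuotientGroup.mk' (Subgroup.normalClosure Rel))
          (Monoid.Coprod.inl (m ^ n) * (Monoid.Coprod.inr (m' ^ n))⁻¹) = 1 :=
        (QuotientGroup.eq_one_iff _).mpr hmem
      simp only [hk, MonoidHom.comp_apply, this, map_one]
    rw [map_mul, map_inv] at this
    exact (mul_inv_eq_one).mp this
  have hμeq : μ' = μ := by
    apply MonoidHom.ext_mint
    rw [show (Multiplicative.ofAdd 1 : Multiplicative ℤ) = Multiplicative.ofAdd (1 : ℤ) from rfl,
      hμ 1, hμ' 1, hrel 1]
  -- images of β and β' commute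
  have hβD : ∀ h : H, β h ∈ derivedSeries Q 1 := by
    intro h
    obtain ⟨c, hc⟩ := hbij.2 h
    have hc' : φH (Multiplicative.ofAdd (1 : ℤ)) c * c⁻¹ = h := hc
    have hcomm : SemidirectProduct.inl (φ := φH) h =
        ⁅SemidirectProduct.inr (φ := φH) (Multiplicative.ofAdd (1 : ℤ)),
          SemidirectProduct.inl c⁆ := by
      rw [commutatorElement_def, ← hc', map_mul, map_inv, SemidirectProduct.inl_aut, map_inv]
    have hβc : β h = ⁅ι (SemidirectProduct.inr (Multiplicative.ofAdd (1 : ℤ))),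
        ι (SemidirectProduct.inl c)⁆ := by
      rw [hβ, MonoidHom.comp_apply, hcomm, map_commutatorElement]
    exact hβc ▸ Subgroup.commutator_mem_commutator (Subgroup.mem_top _) (Subgroup.mem_top _)
  have hβ'D : ∀ h : H', β' h ∈ derivedSeries Q 1 := by
    intro h
    obtain ⟨c, hc⟩ := hbij'.2 h
    have hc' : φH' (Multiplicative.ofAdd (1 : ℤ)) c * c⁻¹ = h := hc
    have hcomm : SemidirectProduct.inl (φ := φH') h =
        ⁅SemidirectProduct.inr (φ := φH') (Multiplicative.ofAdd (1 : ℤ)),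
          SemidirectProduct.inl c⁆ := by
      rw [commutatorElement_def, ← hc', map_mul, map_inv, SemidirectProduct.inl_aut, map_inv]
    have hβc : β' h = ⁅ι' (SemidirectProduct.inr (Multiplicative.ofAdd (1 : ℤ))),
        ι' (SemidirectProduct.inl c)⁆ := by
      rw [hβ', MonoidHom.comp_apply, hcomm, map_commutatorElement]
    exact hβc ▸ Subgroup.commutator_mem_commutator (Subgroup.mem_top _) (Subgroup.mem_top _)
  have hβcomm : ∀ (h : H) (h' : H'), Commute (β h) (β' h') := by
    intro h h'
    have : ⁅β h, β' h'⁆ ∈ derivedSeries Q 2 :=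
      Subgroup.commutator_mem_commutator (hβD h) (hβ'D h')
    rw [hbotQ, Subgroup.mem_bot] at this
    exact commutatorElement_eq_one_iff_commute.mp this
  set βp : H × H' →* Q :=
    { toFun := fun p => β p.1 * β' p.2
      map_one' := by simp
      map_mul' := by
        intro a b
        simp only [Prod.fst_mul, Prod.snd_mul, map_mul]
        rw [mul_assoc, mul_assoc, ← mul_assoc (β b.1), (hβcomm b.1 a.2).eq, mul_assoc] }
    with hβp
  have hβconj : ∀ (z : Multiplicative ℤ) (h : H), β (φH z h) = μ z * β h * (μ z)⁻¹ := by
    intro z h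
    have h1 : (SemidirectProduct.inl (φH z h) : SemidirectProduct H (Multiplicative ℤ) φH) =
        SemidirectProduct.inr z * SemidirectProduct.inl h * (SemidirectProduct.inr z)⁻¹ := by
      rw [SemidirectProduct.inl_aut, map_inv]
    calc β (φH z h) = ι (SemidirectProduct.inl (φH z h)) := rfl
      _ = ι (SemidirectProduct.inr z) * ι (SemidirectProduct.inl h) *
          (ι (SemidirectProduct.inr z))⁻¹ := by rw [h1, map_mul, map_mul, map_inv]
      _ = μ z * β h * (μ z)⁻¹ := rfl
  have hβ'conj : ∀ (z : Multiplicative ℤ) (h : H'), β' (φH' z h) = μ z * β' h * (μ z)⁻¹ := by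
    intro z h
    rw [← hμeq]
    have h1 : (SemidirectProduct.inl (φH' z h) : SemidirectProduct H' (Multiplicative ℤ) φH') =
        SemidirectProduct.inr z * SemidirectProduct.inl h * (SemidirectProduct.inr z)⁻¹ := by
      rw [SemidirectProduct.inl_aut, map_inv]
    calc β' (φH' z h) = ι' (SemidirectProduct.inl (φH' z h)) := rfl
      _ = ι' (SemidirectProduct.inr z) * ι' (SemidirectProduct.inl h) *
          (ι' (SemidirectProduct.inr z))⁻¹ := by rw [h1, map_mul, map_mul, map_inv]
      _ = μ' z * β' h * (μ' z)⁻¹ := rfl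
  have hBcompat : ∀ z : Multiplicative ℤ,
      βp.comp ((prodAut φH φH') z).toMonoidHom = (MulAut.conj (μ z)).toMonoidHom.comp βp := by
    intro z
    refine MonoidHom.ext fun p => ?_
    simp only [MonoidHom.comp_apply, MulEquiv.coe_toMonoidHom, MulAut.conj_apply]
    have : ((prodAut φH φH') z p) = (φH z p.1, φH' z p.2) := rfl
    rw [this]
    show β (φH z p.1) * β' (φH' z p.2) = μ z * (β p.1 * β' p.2) * (μ z)⁻¹
    rw [hβconj, hβ'conj]
    group
  set B : T →* Q := SemidirectProduct.lift βp μ hBcompat with hB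
  have hBinl : ∀ p : H × H', B (SemidirectProduct.inl p) = β p.1 * β' p.2 := by
    intro p
    rw [hB, SemidirectProduct.lift_inl]
    rfl
  have hBinr : ∀ z : Multiplicative ℤ, B (SemidirectProduct.inr z) = μ z := by
    intro z
    rw [hB, SemidirectProduct.lift_inr]
  -- B ∘ jH = ι and B ∘ jH' = ι'
  have hBjH : ∀ x, B (jH x) = ι x := by
    have key : B.comp jH = ι := by
      apply SemidirectProduct.hom_ext
      · refine MonoidHom.ext fun h => ?_
        show B (jH (SemidirectProduct.inl h)) = ι (SemidirectProduct.inl h)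
        rw [hjH, SemidirectProduct.lift_inl]
        show B (SemidirectProduct.inl ((MonoidHom.inl H H') h)) = _
        rw [hBinl]
        show β h * β' 1 = ι (SemidirectProduct.inl h)
        rw [map_one, mul_one]
        rfl
      · refine MonoidHom.ext fun z => ?_
        show B (jH (SemidirectProduct.inr z)) = ι (SemidirectProduct.inr z)
        rw [hjH, SemidirectProduct.lift_inr, hBinr]
        rfl
    exact fun x => DFunLike.congr_fun key x
  have hBjH' : ∀ x, B (jH' x) = ι' x := by
    have key : B.comp jH' = ι' := by
      apply SemidirectProduct.hom_ext
      · refine MonoidHom.ext fun h => ?_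
        show B (jH' (SemidirectProduct.inl h)) = ι' (SemidirectProduct.inl h)
        rw [hjH', SemidirectProduct.lift_inl]
        show B (SemidirectProduct.inl ((MonoidHom.inr H H') h)) = _
        rw [hBinl]
        show β 1 * β' h = ι' (SemidirectProduct.inl h)
        rw [map_one, one_mul]
        rfl
      · refine MonoidHom.ext fun z => ?_
        show B (jH' (SemidirectProduct.inr z)) = ι' (SemidirectProduct.inr z)
        rw [hjH', SemidirectProduct.lift_inr, hBinr]
        exact (DFunLike.congr_fun hμeq z).symm
    exact fun x => DFunLike.congr_fun key x
  have hFk : ∀ x : Monoid.Coprod G G', F (k x) = F0 x := fun x => rfl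
  have hιGk : ∀ g : G, ιG (QuotientGroup.mk g) = k (Monoid.Coprod.inl g) := fun g => rfl
  have hιG'k : ∀ g : G', ιG' (QuotientGroup.mk g) = k (Monoid.Coprod.inr g) := fun g => rfl
  -- B ∘ F = id
  have hBF : B.comp F = MonoidHom.id Q := by
    have key : ((B.comp F).comp k) = k := by
      apply Monoid.Coprod.hom_ext
      · refine MonoidHom.ext fun g => ?_
        show B (F (k (Monoid.Coprod.inl g))) = k (Monoid.Coprod.inl g)
        rw [hFk, hF0, Monoid.Coprod.lift_apply_inl, hfG]
        show B (jH (e (QuotientGroup.mk g))) = _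
        rw [hBjH (e (QuotientGroup.mk g))]
        show ιG (e.symm (e (QuotientGroup.mk g))) = _
        rw [MulEquiv.symm_apply_apply]
        exact hιGk g
      · refine MonoidHom.ext fun g => ?_
        show B (F (k (Monoid.Coprod.inr g))) = k (Monoid.Coprod.inr g)
        rw [hFk, hF0, Monoid.Coprod.lift_apply_inr, hfG']
        show B (jH' (e' (QuotientGroup.mk g))) = _
        rw [hBjH' (e' (QuotientGroup.mk g))]
        show ιG' (e'.symm (e' (QuotientGroup.mk g))) = _
        rw [MulEquiv.symm_apply_apply]
        exact hιG'k g
    refine MonoidHom.ext fun q => ?_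
    obtain ⟨x, rfl⟩ := hksurj q
    exact DFunLike.congr_fun key x
  -- F ∘ ιG = jH ∘ e  and  F ∘ ιG' = jH' ∘ e'
  have hFιG : ∀ x : G ⧸ derivedSeries G 2, F (ιG x) = jH (e x) := by
    intro x
    induction x using QuotientGroup.induction_on with
    | H g =>
      rw [hιGk, hFk, hF0, Monoid.Coprod.lift_apply_inl, hfG]
      rfl
  have hFιG' : ∀ x : G' ⧸ derivedSeries G' 2, F (ιG' x) = jH' (e' x) := by
    intro x
    induction x using QuotientGroup.induction_on with
    | H g =>
      rw [hιG'k, hFk, hF0, Monoid.Coprod.lift_apply_inr, hfG']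
      rfl
  -- F ∘ B = id
  have hFB : F.comp B = MonoidHom.id T := by
    apply SemidirectProduct.hom_ext
    · refine MonoidHom.ext fun p => ?_
      show F (B (SemidirectProduct.inl p)) = SemidirectProduct.inl p
      rw [hBinl, map_mul]
      have h1 : F (β p.1) = SemidirectProduct.inl (φ := prodAut φH φH') (p.1, 1) := by
        have hb : β p.1 = ιG (e.symm (SemidirectProduct.inl p.1)) := rfl
        rw [hb, hFιG, MulEquiv.apply_symm_apply, hjH, SemidirectProduct.lift_inl]
        rfl
      have h2 : F (β' p.2) = SemidirectProduct.inl (φ := prodAut φH φH') (1, p.2) := by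
        have hb : β' p.2 = ιG' (e'.symm (SemidirectProduct.inl p.2)) := rfl
        rw [hb, hFιG', MulEquiv.apply_symm_apply, hjH', SemidirectProduct.lift_inl]
        rfl
      rw [h1, h2, ← map_mul]
      simp
    · apply MonoidHom.ext_mint
      show F (B (SemidirectProduct.inr (Multiplicative.ofAdd 1))) =
        SemidirectProduct.inr (Multiplicative.ofAdd 1)
      rw [hBinr, show (Multiplicative.ofAdd 1 : Multiplicative ℤ) =
        Multiplicative.ofAdd (1 : ℤ) from rfl, hμ 1, hFk, hF0,
        Monoid.Coprod.lift_apply_inl, hfGm 1]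
  exact ⟨MonoidHom.toMulEquiv F B hBF hFB⟩
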